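/- Suppose 2^{<κ} = κ and H is an ideal on P_κ(λ) with cof(H) < non_κ(weakly selective). Then for every f : κ → κ and every A ∈ H⁺ there is B ∈ H⁺ ∩ P(A) such that f(∪(a∩κ)) ⊆ b for all a, b ∈ B with ∪(a∩κ) < ∪(b∩κ) (the ordinal f(∪(a∩κ)) being identified with its set of predecessors). -/

import Mathlib

open Cardinal Set

namespace PaperFormal

noncomputable section

/-- The least (small) cardinality of a family `F : Set X` satisfying `P`. -/
def leastCard {X : Type 1} (P : Set X → Prop) : Cardinal.{0} :=
  sInf {c : Cardinal.{0} | ∃ F : Set X, P F ∧ Cardinal.lift.{1} c = #F}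

/-- The collection of (codings of) functions from `κ` to `κ`. -/
def funOn (κ : Cardinal.{0}) : Set (Ordinal.{0} → Ordinal.{0}) :=
  {f | ∀ α < κ.ord, f α < κ.ord}

/-- The unequality number `U_κ`. -/
def uneq (κ : Cardinal.{0}) : Cardinal.{0} :=
  leastCard fun F : Set (Ordinal.{0} → Ordinal.{0}) => F ⊆ funOn κ ∧
    ∀ g ∈ funOn κ, ∃ f ∈ F, {α | α < κ.ord ∧ f α = g α} = ∅

/-- The dominating number `d_κ`. -/
def domNum (κ : Cardinal.{0}) : Cardinal.{0} :=
  leastCard fun F : Set (Ordinal.{0} → Ordinal.{0}) => F ⊆ funOn κ ∧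
    ∀ g ∈ funOn κ, ∃ f ∈ F, ∀ α < κ.ord, g α < f α

/-- The number `d̄_κ`. -/
def domBar (κ : Cardinal.{0}) : Cardinal.{0} :=
  leastCard fun X : Set (Ordinal.{0} → Ordinal.{0}) => X ⊆ funOn κ ∧
    ∀ g ∈ funOn κ, ∃ x ⊆ X, x.Nonempty ∧ #x < Cardinal.lift.{1} κ ∧
      ∀ α < κ.ord, g α < sSup {o | ∃ f ∈ x, f α = o}

/-- The generalized Cantor space `^ρ2`, with points coded as subsets of `Iio ρ.ord`. -/
def cantor (ρ : Cardinal.{0}) : Set (Set Ordinal.{0}) := {x | x ⊆ Iio ρ.ord}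

/-- A forcing condition: a pair `(a, t)` with `t ⊆ a ⊆ Iio ρ.ord` and `|a| < ν`. -/
def IsCond (ν ρ : Cardinal.{0}) (a t : Set Ordinal.{0}) : Prop :=
  a ⊆ Iio ρ.ord ∧ t ⊆ a ∧ #a < Cardinal.lift.{1} ν

/-- The basic open set determined by a condition. -/
def basicOpen (ρ : Cardinal.{0}) (a t : Set Ordinal.{0}) : Set (Set Ordinal.{0}) :=
  {x | x ⊆ Iio ρ.ord ∧ x ∩ a = t}

/-- Dense open subsets of `^ρ2` (for the `<ν`-support topology). -/
def DenseOpen (ν ρ : Cardinal.{0}) (D : Set (Set Ordinal.{0})) : Prop :=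
  D ⊆ cantor ρ ∧
  (∀ x ∈ D, ∃ a t, IsCond ν ρ a t ∧ x ∈ basicOpen ρ a t ∧ basicOpen ρ a t ⊆ D) ∧
  (∀ a t, IsCond ν ρ a t → (basicOpen ρ a t ∩ D).Nonempty)

/-- Members of `M_{ν,ρ}`. -/
def Meager (ν ρ : Cardinal.{0}) (W : Set (Set Ordinal.{0})) : Prop :=
  W ⊆ cantor ρ ∧ ∃ X : Set (Set (Set Ordinal.{0})), X.Nonempty ∧
    #X ≤ Cardinal.lift.{1} ν ∧ (∀ D ∈ X, DenseOpen ν ρ D) ∧ W ∩ ⋂₀ X = ∅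

/-- The covering number for category `cov(M_{ν,ρ})`. -/
def covM (ν ρ : Cardinal.{0}) : Cardinal.{0} :=
  leastCard fun Y : Set (Set (Set Ordinal.{0})) =>
    (∀ W ∈ Y, Meager ν ρ W) ∧ ⋃₀ Y = cantor ρ

/-- A (`κ`-complete) ideal on `κ`. -/
structure IdealK (κ : Cardinal.{0}) where
  mem : Set (Set Ordinal.{0})
  subset_iio : ∀ A ∈ mem, A ⊆ Iio κ.ord
  singleton_mem : ∀ α < κ.ord, {α} ∈ mem
  subset_mem : ∀ A ∈ mem, ∀ B ⊆ A, B ∈ mem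
  sUnion_mem : ∀ X : Set (Set Ordinal.{0}), X ⊆ mem → #X < Cardinal.lift.{1} κ → ⋃₀ X ∈ mem
  ne_top : Iio κ.ord ∉ mem

/-- `J⁺`, the sets (⊆ κ) not in the ideal. -/
def IdealK.plus {κ : Cardinal.{0}} (J : IdealK κ) : Set (Set Ordinal.{0}) :=
  {A | A ⊆ Iio κ.ord ∧ A ∉ J.mem}

/-- `cof(J)`. -/
def IdealK.cof {κ : Cardinal.{0}} (J : IdealK κ) : Cardinal.{0} :=
  leastCard fun X : Set (Set Ordinal.{0}) =>
    X ⊆ J.mem ∧ ∀ A, A ∈ J.mem ↔ ∃ B ∈ X, A ⊆ B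

/-- `cof̄(J)`. -/
def IdealK.cofBar {κ : Cardinal.{0}} (J : IdealK κ) : Cardinal.{0} :=
  leastCard fun X : Set (Set Ordinal.{0}) =>
    X ⊆ J.mem ∧ ∀ A ∈ J.mem, ∃ x ⊆ X, #x < Cardinal.lift.{1} κ ∧ A ⊆ ⋃₀ x

/-- `non_κ(P)`. -/
def nonK (κ : Cardinal.{0}) (P : IdealK κ → Prop) : Cardinal.{0} :=
  sInf {c | ∃ J : IdealK κ, J.cof = c ∧ ¬ P J}

/-- `non̄_κ(P)`. -/
def nonBarK (κ : Cardinal.{0}) (P : IdealK κ → Prop) : Cardinal.{0} :=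
  sInf {c | ∃ J : IdealK κ, J.cofBar = c ∧ ¬ P J}

/-- Weak `P`-point. -/
def WeakPPoint {κ : Cardinal.{0}} (J : IdealK κ) : Prop :=
  ∀ A ∈ J.plus, ∀ f : Ordinal.{0} → Ordinal.{0},
    (∀ α ∈ A, f α < κ.ord) → (∀ β, {α ∈ A | f α = β} ∈ J.mem) →
    ∃ B ∈ J.plus, B ⊆ A ∧ ∀ β, #{α ∈ B | f α = β} < Cardinal.lift.{1} κ

/-- Weak `Q`-point. -/
def WeakQPoint {κ : Cardinal.{0}} (J : IdealK κ) : Prop :=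
  ∀ A ∈ J.plus, ∀ g ∈ funOn κ,
    ∃ B ∈ J.plus, B ⊆ A ∧ ∀ α ∈ B, ∀ β ∈ B, α < β → g α < β

/-- Weakly selective ideal. -/
def WeaklySelective {κ : Cardinal.{0}} (J : IdealK κ) : Prop :=
  WeakPPoint J ∧ WeakQPoint J

/-- Weak semi-`Q`-point. -/
def WeakSemiQPoint {κ : Cardinal.{0}} (J : IdealK κ) : Prop :=
  ∀ A ∈ J.plus, ∀ f : Ordinal.{0} → Ordinal.{0},
    (∀ α ∈ A, f α < κ.ord) →
    (∀ β, #{α ∈ A | f α = β} < Cardinal.lift.{1} κ) →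
    ∃ C ∈ J.plus, C ⊆ A ∧ ∀ β < κ.ord, #{α ∈ C | f α = β} ≤ Cardinal.lift.{1} β.card

/-- `P_κ(λ)`, coded as the small subsets of `Iio λ.ord`. -/
def smallSet (κ lam : Cardinal.{0}) : Set (Set Ordinal.{0}) :=
  {a | a ⊆ Iio lam.ord ∧ #a < Cardinal.lift.{1} κ}

/-- The ideal `I_{κ,λ}` of noncofinal subsets of `P_κ(λ)`. -/
def Ikl (κ lam : Cardinal.{0}) : Set (Set (Set Ordinal.{0})) :=
  {A | A ⊆ smallSet κ lam ∧ ∃ a ∈ smallSet κ lam, ∀ b ∈ A, ¬ a ⊆ b}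

/-- A (`κ`-complete fine) ideal on `P_κ(λ)`. -/
structure IdealP (κ lam : Cardinal.{0}) where
  mem : Set (Set (Set Ordinal.{0}))
  subset_pk : ∀ A ∈ mem, A ⊆ smallSet κ lam
  fine : Ikl κ lam ⊆ mem
  subset_mem : ∀ A ∈ mem, ∀ B ⊆ A, B ∈ mem
  sUnion_mem : ∀ X : Set (Set (Set Ordinal.{0})), X ⊆ mem →
    #X < Cardinal.lift.{1} κ → ⋃₀ X ∈ mem
  ne_top : smallSet κ lam ∉ mem

/-- `H⁺` computed from the underlying collection `Hm` of an ideal on `P_κ(λ)`. -/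
def plusOf (κ lam : Cardinal.{0}) (Hm : Set (Set (Set Ordinal.{0}))) :
    Set (Set (Set Ordinal.{0})) :=
  {A | A ⊆ smallSet κ lam ∧ A ∉ Hm}

/-- `H⁺`. -/
def IdealP.plus {κ lam : Cardinal.{0}} (H : IdealP κ lam) : Set (Set (Set Ordinal.{0})) :=
  plusOf κ lam H.mem

/-- `cof(H)`. -/
def IdealP.cof {κ lam : Cardinal.{0}} (H : IdealP κ lam) : Cardinal.{0} :=
  leastCard fun X : Set (Set (Set Ordinal.{0})) =>
    X ⊆ H.mem ∧ ∀ A, A ∈ H.mem ↔ ∃ B ∈ X, A ⊆ B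

/-- `cof̄(H)`. -/
def IdealP.cofBar {κ lam : Cardinal.{0}} (H : IdealP κ lam) : Cardinal.{0} :=
  leastCard fun X : Set (Set (Set Ordinal.{0})) =>
    X ⊆ H.mem ∧ ∀ A ∈ H.mem, ∃ x ⊆ X, #x < Cardinal.lift.{1} κ ∧ A ⊆ ⋃₀ x

/-- `d^κ_{κ,λ}`. -/
def domP (κ lam : Cardinal.{0}) : Cardinal.{0} :=
  leastCard fun F : Set (Ordinal.{0} → Set Ordinal.{0}) =>
    (∀ f ∈ F, ∀ α < κ.ord, f α ∈ smallSet κ lam) ∧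
    ∀ g : Ordinal.{0} → Set Ordinal.{0}, (∀ α < κ.ord, g α ∈ smallSet κ lam) →
      ∃ f ∈ F, ∀ α < κ.ord, g α ⊆ f α

/-- A maximal almost disjoint family of size `≥ κ` for `H` (a member of `M_H^{≥κ}`). -/
def IsMad {κ lam : Cardinal.{0}} (H : IdealP κ lam) (Q : Set (Set (Set Ordinal.{0}))) : Prop :=
  Q ⊆ H.plus ∧ Cardinal.lift.{1} κ ≤ #Q ∧
  (∀ A ∈ Q, ∀ B ∈ Q, A ≠ B → A ∩ B ∈ H.mem) ∧
  ∀ C ∈ H.plus, ∃ A ∈ Q, A ∩ C ∈ H.plus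

/-- The (small) cardinal `c` with `lift c = c'`, used to pull `λ^{<κ} = |P_κ(λ)|` down. -/
def downCard (c : Cardinal.{1}) : Cardinal.{0} :=
  sInf {d : Cardinal.{0} | Cardinal.lift.{1} d = c}

open Classical in
/-- The number `a_H`. -/
def aNum {κ lam : Cardinal.{0}} (H : IdealP κ lam) : Cardinal.{0} :=
  if ∃ Q, IsMad H Q then sInf {c | ∃ Q, IsMad H Q ∧ Cardinal.lift.{1} c = #Q}
  else 2 ^ Order.succ (downCard #(smallSet κ lam))

/-- Weak `π`-point. -/
def WeakPiPoint {κ lam : Cardinal.{0}} (H : IdealP κ lam) : Prop :=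
  ∀ f : Ordinal.{0} → Set (Set Ordinal.{0}), (∀ α < κ.ord, f α ∈ H.mem) →
    ∀ A ∈ H.plus, ∃ B ∈ H.plus, B ⊆ A ∧ ∀ α < κ.ord, B ∩ f α ∈ Ikl κ lam

/-- `∪(a ∩ κ)`. -/
def supK (κ : Cardinal.{0}) (a : Set Ordinal.{0}) : Ordinal.{0} :=
  sSup (a ∩ Iio κ.ord)

/-- The relation `a ≺ b`. -/
def prec (κ : Cardinal.{0}) (a b : Set Ordinal.{0}) : Prop :=
  a ⊆ b ∧ supK κ a < supK κ b

/-- `[A]_κ²`. -/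
def pairsK (κ : Cardinal.{0}) (A : Set (Set Ordinal.{0})) : Set (Ordinal.{0} × Set Ordinal.{0}) :=
  {p | ∃ a ∈ A, ∃ b ∈ A, supK κ a < supK κ b ∧ p = (supK κ a, b)}

/-- `[A]_≺²`. -/
def pairsPrec (κ : Cardinal.{0}) (A : Set (Set Ordinal.{0})) :
    Set (Ordinal.{0} × Set Ordinal.{0}) :=
  {p | ∃ a ∈ A, ∃ b ∈ A, prec κ a b ∧ p = (supK κ a, b)}

/-- `[A]_{κ,κ}²`. -/
def pairsKK (κ : Cardinal.{0}) (A : Set (Set Ordinal.{0})) : Set (Ordinal.{0} × Ordinal.{0}) :=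
  {p | ∃ a ∈ A, ∃ b ∈ A, supK κ a < supK κ b ∧ p = (supK κ a, supK κ b)}

/-- `S` is a set of ordinals of order type `α`. -/
def OrdType (S : Set Ordinal.{0}) (α : Ordinal.{0}) : Prop :=
  ∃ e : Ordinal.{0} → Ordinal.{0},
    (∀ i < α, ∀ j < α, i < j → e i < e j) ∧ e '' Iio α = S

/-- `(B, ≺)` has order type `α`. -/
def OrdTypePrec (κ : Cardinal.{0}) (B : Set (Set Ordinal.{0})) (α : Ordinal.{0}) : Prop :=
  ∃ e : Ordinal.{0} → Set Ordinal.{0},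
    (∀ i < α, ∀ j < α, i < j → prec κ (e i) (e j)) ∧ e '' Iio α = B

/-- The partition relation `κ → (κ, θ)²`. -/
def ArrowKTheta (κ : Cardinal.{0}) (θ : Ordinal.{0}) : Prop :=
  ∀ f : Ordinal.{0} → Ordinal.{0} → Fin 2, ∃ A ⊆ Iio κ.ord,
    (OrdType A κ.ord ∧ ∀ α ∈ A, ∀ β ∈ A, α < β → f α β = 0) ∨
    (OrdType A θ ∧ ∀ α ∈ A, ∀ β ∈ A, α < β → f α β = 1)

/-- `κ` is weakly compact. -/
def WeaklyCompact (κ : Cardinal.{0}) : Prop :=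
  ∀ f : Ordinal.{0} → Ordinal.{0} → Fin 2, ∃ A ⊆ Iio κ.ord,
    OrdType A κ.ord ∧ ∃ i, ∀ α ∈ A, ∀ β ∈ A, α < β → f α β = i

/-- The partition relation `J⁺ → (J⁺, α)²` for an ideal on `κ`. -/
def ArrowJ {κ : Cardinal.{0}} (J : IdealK κ) (α : Ordinal.{0}) : Prop :=
  ∀ A ∈ J.plus, ∀ f : Ordinal.{0} → Ordinal.{0} → Fin 2,
    ∃ B ⊆ A, (B ∈ J.plus ∧ ∀ β ∈ B, ∀ γ ∈ B, β < γ → f β γ = 0) ∨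
             (OrdType B α ∧ ∀ β ∈ B, ∀ γ ∈ B, β < γ → f β γ = 1)

/-- The square bracket relation `J⁺ → [J⁺]_ρ²` for an ideal on `κ`. -/
def SqBrJ {κ : Cardinal.{0}} (J : IdealK κ) (ρ : Cardinal.{0}) : Prop :=
  ∀ A ∈ J.plus, ∀ f : Ordinal.{0} → Ordinal.{0} → Ordinal.{0},
    (∀ β ∈ A, ∀ γ ∈ A, β < γ → f β γ < ρ.ord) →
    ∃ B ∈ J.plus, B ⊆ A ∧ {ξ | ∃ β ∈ B, ∃ γ ∈ B, β < γ ∧ f β γ = ξ} ≠ Iio ρ.ord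

/-- `H⁺ →_κ (H⁺, α)²`. -/
def ArrowP (κ lam : Cardinal.{0}) (Hm : Set (Set (Set Ordinal.{0}))) (α : Ordinal.{0}) : Prop :=
  ∀ F : Ordinal.{0} → Set Ordinal.{0} → Fin 2, ∀ A ∈ plusOf κ lam Hm,
    ∃ B ⊆ A, (B ∈ plusOf κ lam Hm ∧ ∀ p ∈ pairsK κ B, F p.1 p.2 = 0) ∨
             (OrdTypePrec κ B α ∧ ∀ p ∈ pairsK κ B, F p.1 p.2 = 1)

/-- `H⁺ →_{κ,κ} (H⁺, α)²`. -/
def ArrowPKK (κ lam : Cardinal.{0}) (Hm : Set (Set (Set Ordinal.{0}))) (α : Ordinal.{0}) : Prop :=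
  ∀ F : Ordinal.{0} → Ordinal.{0} → Fin 2, ∀ A ∈ plusOf κ lam Hm,
    ∃ B ⊆ A, (B ∈ plusOf κ lam Hm ∧ ∀ p ∈ pairsKK κ B, F p.1 p.2 = 0) ∨
             (OrdTypePrec κ B α ∧ ∀ p ∈ pairsKK κ B, F p.1 p.2 = 1)

/-- `H⁺ →_{κ,κ} (H⁺; α)²`. -/
def ArrowPKKsemi (κ lam : Cardinal.{0}) (Hm : Set (Set (Set Ordinal.{0}))) (α : Ordinal.{0}) :
    Prop :=
  ∀ F : Ordinal.{0} → Ordinal.{0} → Fin 2, ∀ A ∈ plusOf κ lam Hm,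
    ∃ B ⊆ A, (B ∈ plusOf κ lam Hm ∧ ∀ p ∈ pairsKK κ B, F p.1 p.2 = 0) ∨
             (OrdType {o | ∃ a ∈ B, supK κ a = o} α ∧ ∀ p ∈ pairsKK κ B, F p.1 p.2 = 1)

/-- `H⁺ →_κ (H⁺)²`. -/
def ArrowPConst (κ lam : Cardinal.{0}) (Hm : Set (Set (Set Ordinal.{0}))) : Prop :=
  ∀ F : Ordinal.{0} → Set Ordinal.{0} → Fin 2, ∀ A ∈ plusOf κ lam Hm,
    ∃ B ∈ plusOf κ lam Hm, B ⊆ A ∧ ∃ i, ∀ p ∈ pairsK κ B, F p.1 p.2 = i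

/-- `H⁺ →_{κ,κ} [H⁺]_ρ²`. -/
def SqBrPKK (κ lam : Cardinal.{0}) (Hm : Set (Set (Set Ordinal.{0}))) (ρ : Cardinal.{0}) : Prop :=
  ∀ F : Ordinal.{0} → Ordinal.{0} → Ordinal.{0},
    (∀ α β : Ordinal.{0}, α < β → β < κ.ord → F α β < ρ.ord) →
    ∀ A ∈ plusOf κ lam Hm, ∃ B ∈ plusOf κ lam Hm, B ⊆ A ∧
      {ξ | ∃ p ∈ pairsKK κ B, F p.1 p.2 = ξ} ≠ Iio ρ.ord

/-- The class `K(κ,λ)`. -/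
def Kset (κ lam : Cardinal.{0}) : Set Cardinal.{0} :=
  {σ | lam ≤ σ ∧ ∃ T ⊆ smallSet κ lam, Cardinal.lift.{1} σ = #T ∧
    ∀ a ∈ smallSet κ lam, #{t ∈ T | t ⊆ a} < Cardinal.lift.{1} κ}

end

end PaperFormal

namespace PaperFormal

noncomputable section AuxProof

open Cardinal Set

variable {κ lam : Cardinal.{0}}

lemma sSup_lt_ord_small (hreg : κ.IsRegular) {s : Set Ordinal.{0}}
    (hs : ∀ x ∈ s, x < κ.ord) (hc : #s < Cardinal.lift.{1} κ) :
    sSup s < κ.ord := by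
  obtain ⟨c0, hc0⟩ := Cardinal.mem_range_lift_of_le hc.le
  have hlt : c0 < κ := by rwa [← Cardinal.lift_lt.{0,1}, hc0]
  have hmk : #(ULift.{1} c0.out) = #s := by rw [Cardinal.mk_uLift, Cardinal.mk_out, hc0]
  obtain ⟨e⟩ := Cardinal.eq.mp hmk
  have hrange : Set.range (fun i : c0.out => ((e (ULift.up i) : s) : Ordinal.{0})) = s := by
    ext x
    constructor
    · rintro ⟨i, rfl⟩; exact (e (ULift.up i)).2
    · intro hx
      refine ⟨(e.symm ⟨x, hx⟩).down, ?_⟩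
      show ((e (e.symm ⟨x, hx⟩) : s) : Ordinal.{0}) = x
      rw [Equiv.apply_symm_apply]
  have heq : sSup s = iSup (fun i : c0.out => ((e (ULift.up i) : s) : Ordinal.{0})) := by
    rw [iSup, hrange]
  rw [heq]
  refine Ordinal.iSup_lt_ord ?_ ?_
  · rw [Cardinal.mk_out, hreg.cof_eq]; exact hlt
  · intro i; exact hs _ ((e (ULift.up i)).2)

lemma mk_Iio_ord (c : Cardinal.{0}) : #(Iio c.ord) = Cardinal.lift.{1} c := by
  rw [Ordinal.mk_Iio_ordinal, Cardinal.card_ord]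

lemma supK_lt (hreg : κ.IsRegular) {a : Set Ordinal.{0}} (ha : #a < Cardinal.lift.{1} κ) :
    supK κ a < κ.ord := by
  refine sSup_lt_ord_small hreg (fun x hx => hx.2) ?_
  exact lt_of_le_of_lt (Cardinal.mk_le_mk_of_subset inter_subset_left) ha

/-- The least ordinal `< κ.ord` not in `a`. -/
def mfn (κ : Cardinal.{0}) (a : Set Ordinal.{0}) : Ordinal.{0} :=
  sInf {γ | γ < κ.ord ∧ γ ∉ a}

lemma mfn_spec {a : Set Ordinal.{0}} (ha : #a < Cardinal.lift.{1} κ) :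
    mfn κ a < κ.ord ∧ mfn κ a ∉ a := by
  have hne : {γ | γ < κ.ord ∧ γ ∉ a}.Nonempty := by
    by_contra h
    have hsub : Iio κ.ord ⊆ a := by
      intro γ hγ
      by_contra hγa
      exact h ⟨γ, hγ, hγa⟩
    have hle := Cardinal.mk_le_mk_of_subset hsub
    rw [mk_Iio_ord] at hle
    exact absurd (hle.trans_lt ha) (lt_irrefl _)
  exact csInf_mem hne

lemma lt_mfn_mem {a : Set Ordinal.{0}} {γ : Ordinal.{0}}
    (hγ : γ < mfn κ a) (hκ : mfn κ a < κ.ord) : γ ∈ a := by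
  by_contra hh
  exact absurd (csInf_le (OrderBot.bddBelow _) ⟨hγ.trans hκ, hh⟩ : mfn κ a ≤ γ)
    (not_le.mpr hγ)

lemma one_lt_liftκ (huc : ℵ₀ < κ) : (1 : Cardinal.{1}) < Cardinal.lift.{1} κ :=
  lt_of_lt_of_le Cardinal.one_lt_aleph0 (Cardinal.aleph0_le_lift.mpr huc.le)

lemma notMem_Ikl (huc : ℵ₀ < κ) {δ : Ordinal.{0}} (hδ : δ < lam.ord) :
    {a | a ∈ smallSet κ lam ∧ δ ∉ a} ∈ Ikl κ lam := by
  refine ⟨fun a ha => ha.1, {δ}, ⟨singleton_subset_iff.mpr hδ, ?_⟩, ?_⟩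
  · rw [Cardinal.mk_singleton]; exact one_lt_liftκ huc
  · intro b hb hcon
    exact hb.2 (hcon rfl)

lemma empty_mem (huc : ℵ₀ < κ) (H : IdealP κ lam) : (∅ : Set (Set Ordinal.{0})) ∈ H.mem := by
  refine H.fine ⟨empty_subset _, ∅, ⟨empty_subset _, ?_⟩, fun b hb => absurd hb (notMem_empty b)⟩
  rw [Cardinal.mk_emptyCollection]
  exact lt_trans zero_lt_one (one_lt_liftκ huc)

lemma mle_mem (hreg : κ.IsRegular) (huc : ℵ₀ < κ) (hlt : κ < lam) (H : IdealP κ lam)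
    {γ : Ordinal.{0}} (hγ : γ < κ.ord) :
    {a | a ∈ smallSet κ lam ∧ mfn κ a ≤ γ} ∈ H.mem := by
  have hκord := Cardinal.isSuccLimit_ord hreg.aleph0_le
  have hκl : κ.ord < lam.ord := Cardinal.ord_lt_ord.mpr hlt
  have hsucc : γ + 1 < κ.ord := by rw [Ordinal.add_one_eq_succ]; exact hκord.succ_lt hγ
  have hXmem : ⋃₀ ((fun δ : Ordinal.{0} => {a | a ∈ smallSet κ lam ∧ δ ∉ a}) '' (Iio (γ + 1)))
      ∈ H.mem := by
    refine H.sUnion_mem _ ?_ ?_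
    · rintro _ ⟨δ, hδ, rfl⟩
      exact H.fine (notMem_Ikl huc ((hδ.trans hsucc).trans hκl))
    · refine lt_of_le_of_lt Cardinal.mk_image_le ?_
      rw [Ordinal.mk_Iio_ordinal]
      exact Cardinal.lift_lt.mpr (Cardinal.lt_ord.mp hsucc)
  refine H.subset_mem _ hXmem _ ?_
  intro a ha
  have hm := mfn_spec (κ := κ) ha.1.2
  refine ⟨_, ⟨mfn κ a, ?_, rfl⟩, ha.1, hm.2⟩
  rw [mem_Iio, Ordinal.add_one_eq_succ, Order.lt_succ_iff]
  exact ha.2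

lemma supK_fiber_mem (hreg : κ.IsRegular) (huc : ℵ₀ < κ) (hlt : κ < lam) (H : IdealP κ lam)
    {β : Ordinal.{0}} (hβ : β < κ.ord) :
    {a | a ∈ smallSet κ lam ∧ supK κ a = β} ∈ H.mem := by
  have hκord := Cardinal.isSuccLimit_ord hreg.aleph0_le
  have hs : β + 1 < κ.ord := by rw [Ordinal.add_one_eq_succ]; exact hκord.succ_lt hβ
  refine H.subset_mem _ (H.fine (notMem_Ikl huc (hs.trans (Cardinal.ord_lt_ord.mpr hlt)))) _ ?_
  rintro a ⟨ha, hsup⟩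
  refine ⟨ha, ?_⟩
  intro hmem
  have hle : β + 1 ≤ supK κ a := le_csSup ⟨κ.ord, fun x hx => hx.2.le⟩ ⟨hmem, hs⟩
  rw [hsup] at hle
  have : β < β + 1 := by rw [Ordinal.add_one_eq_succ]; exact Order.lt_succ β
  exact absurd hle (not_le.mpr this)

/-- The ideal on `κ` induced by a projection `p` from an `H`-positive set `A0`. -/
def inducedIdeal (H : IdealP κ lam) (A0 : Set (Set Ordinal.{0}))
    (p : Set Ordinal.{0} → Ordinal.{0}) (hA0 : A0 ∉ H.mem)
    (hp1 : ∀ a ∈ A0, p a < κ.ord)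
    (hp2 : ∀ ξ, {a | a ∈ A0 ∧ p a = ξ} ∈ H.mem) : IdealK κ where
  mem := {T | T ⊆ Iio κ.ord ∧ {a | a ∈ A0 ∧ p a ∈ T} ∈ H.mem}
  subset_iio := fun T hT => hT.1
  singleton_mem := fun α hα => ⟨singleton_subset_iff.mpr hα,
    H.subset_mem _ (hp2 α) _ (fun a ha => ⟨ha.1, ha.2⟩)⟩
  subset_mem := fun T hT T' hT' =>
    ⟨hT'.trans hT.1, H.subset_mem _ hT.2 _ (fun a ha => ⟨ha.1, hT' ha.2⟩)⟩
  sUnion_mem := fun X hX hXc => by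
    constructor
    · rintro x ⟨T, hT, hxT⟩
      exact (hX hT).1 hxT
    · have heq : {a | a ∈ A0 ∧ p a ∈ ⋃₀ X} =
          ⋃₀ ((fun T => {a | a ∈ A0 ∧ p a ∈ T}) '' X) := by
        ext a
        simp only [mem_sUnion, mem_image, mem_setOf_eq]
        constructor
        · rintro ⟨ha, T, hT, hpa⟩; exact ⟨_, ⟨T, hT, rfl⟩, ha, hpa⟩
        · rintro ⟨_, ⟨T, hT, rfl⟩, ha, hpa⟩; exact ⟨ha, T, hT, hpa⟩
      rw [heq]
      refine H.sUnion_mem _ ?_ (lt_of_le_of_lt Cardinal.mk_image_le hXc)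
      rintro _ ⟨T, hT, rfl⟩
      exact (hX hT).2
  ne_top := by
    intro h
    apply hA0
    have heq : {a | a ∈ A0 ∧ p a ∈ Iio κ.ord} = A0 := by
      ext a
      exact ⟨fun h' => h'.1, fun h' => ⟨h', hp1 a h'⟩⟩
    exact heq ▸ h.2

lemma cof_attained (H : IdealP κ lam) :
    ∃ X : Set (Set (Set Ordinal.{0})),
      (X ⊆ H.mem ∧ ∀ A, A ∈ H.mem ↔ ∃ B ∈ X, A ⊆ B) ∧ Cardinal.lift.{1} H.cof = #X := by
  have h1 : #(smallSet κ lam) ≤ Cardinal.lift.{1} ((2 : Cardinal.{0}) ^ lam) := by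
    have hinj : Function.Injective (fun a : (smallSet κ lam) =>
        ({x : (Iio lam.ord) | (x : Ordinal.{0}) ∈ (a : Set Ordinal.{0})} : Set (Iio lam.ord))) := by
      intro a b hab
      apply Subtype.ext
      have hab2 : {x : Iio lam.ord | (x : Ordinal.{0}) ∈ (a : Set Ordinal.{0})} =
          {x : Iio lam.ord | (x : Ordinal.{0}) ∈ (b : Set Ordinal.{0})} := hab
      ext x
      constructor
      · intro hx
        have hx' : x ∈ Iio lam.ord := a.2.1 hx
        have hm : (⟨x, hx'⟩ : Iio lam.ord) ∈
            {x : Iio lam.ord | (x : Ordinal.{0}) ∈ (a : Set Ordinal.{0})} := hx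
        rw [hab2] at hm
        exact hm
      · intro hx
        have hx' : x ∈ Iio lam.ord := b.2.1 hx
        have hm : (⟨x, hx'⟩ : Iio lam.ord) ∈
            {x : Iio lam.ord | (x : Ordinal.{0}) ∈ (b : Set Ordinal.{0})} := hx
        rw [← hab2] at hm
        exact hm
    calc #(smallSet κ lam) ≤ #(Set (Iio lam.ord)) := Cardinal.mk_le_of_injective hinj
      _ = (2 : Cardinal.{1}) ^ #(Iio lam.ord) := Cardinal.mk_set
      _ = (2 : Cardinal.{1}) ^ Cardinal.lift.{1} lam := by rw [mk_Iio_ord]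
      _ = Cardinal.lift.{1} ((2 : Cardinal.{0}) ^ lam) := by
        simp [Cardinal.lift_power, Cardinal.lift_two]
  have h2 : #(H.mem) ≤ Cardinal.lift.{1} ((2 : Cardinal.{0}) ^ ((2 : Cardinal.{0}) ^ lam)) := by
    have hinj : Function.Injective (fun A : (H.mem) =>
        ({x : (smallSet κ lam) | (x : Set Ordinal.{0}) ∈ (A : Set (Set Ordinal.{0}))} :
          Set (smallSet κ lam))) := by
      intro A B hab
      apply Subtype.ext
      have hab2 : {x : smallSet κ lam | (x : Set Ordinal.{0}) ∈ (A : Set (Set Ordinal.{0}))} =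
          {x : smallSet κ lam | (x : Set Ordinal.{0}) ∈ (B : Set (Set Ordinal.{0}))} := hab
      ext a
      constructor
      · intro hx
        have hx' : a ∈ smallSet κ lam := H.subset_pk _ A.2 hx
        have hm : (⟨a, hx'⟩ : smallSet κ lam) ∈
            {x : smallSet κ lam | (x : Set Ordinal.{0}) ∈ (A : Set (Set Ordinal.{0}))} := hx
        rw [hab2] at hm
        exact hm
      · intro hx
        have hx' : a ∈ smallSet κ lam := H.subset_pk _ B.2 hx
        have hm : (⟨a, hx'⟩ : smallSet κ lam) ∈
            {x : smallSet κ lam | (x : Set Ordinal.{0}) ∈ (B : Set (Set Ordinal.{0}))} := hx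
        rw [← hab2] at hm
        exact hm
    calc #(H.mem) ≤ #(Set (smallSet κ lam)) := Cardinal.mk_le_of_injective hinj
      _ = (2 : Cardinal.{1}) ^ #(smallSet κ lam) := Cardinal.mk_set
      _ ≤ (2 : Cardinal.{1}) ^ Cardinal.lift.{1} ((2 : Cardinal.{0}) ^ lam) :=
        Cardinal.power_le_power_left (two_ne_zero) h1
      _ = Cardinal.lift.{1} ((2 : Cardinal.{0}) ^ ((2 : Cardinal.{0}) ^ lam)) := by
        simp [Cardinal.lift_power, Cardinal.lift_two]
  obtain ⟨d, hd⟩ := Cardinal.mem_range_lift_of_le h2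
  have hne : {c : Cardinal.{0} | ∃ F : Set (Set (Set Ordinal.{0})),
      (F ⊆ H.mem ∧ ∀ A, A ∈ H.mem ↔ ∃ B ∈ F, A ⊆ B) ∧ Cardinal.lift.{1} c = #F}.Nonempty := by
    refine ⟨d, H.mem, ⟨subset_rfl, fun A => ⟨fun h => ⟨A, h, subset_rfl⟩, ?_⟩⟩, hd⟩
    rintro ⟨B, hB, hAB⟩
    exact H.subset_mem B hB A hAB
  exact csInf_mem hne

lemma induced_cof_le (H : IdealP κ lam) (A0 : Set (Set Ordinal.{0}))
    (p : Set Ordinal.{0} → Ordinal.{0}) (hA0 : A0 ∉ H.mem)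
    (hp1 : ∀ a ∈ A0, p a < κ.ord)
    (hp2 : ∀ ξ, {a | a ∈ A0 ∧ p a = ξ} ∈ H.mem) :
    (inducedIdeal H A0 p hA0 hp1 hp2).cof ≤ H.cof := by
  obtain ⟨X, ⟨hX1, hX2⟩, hXc⟩ := cof_attained H
  set J := inducedIdeal H A0 p hA0 hp1 hp2 with hJ
  set T : Set (Set Ordinal.{0}) → Set Ordinal.{0} :=
    fun B => {β | β < κ.ord ∧ {a | a ∈ A0 ∧ p a = β} ⊆ B} with hT
  have hY1 : T '' X ⊆ J.mem := by
    rintro _ ⟨B, hB, rfl⟩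
    refine ⟨fun β hβ => hβ.1, H.subset_mem B (hX1 hB) _ ?_⟩
    rintro a ⟨ha, hpa⟩
    exact hpa.2 ⟨ha, rfl⟩
  have hY2 : ∀ S, S ∈ J.mem ↔ ∃ C ∈ T '' X, S ⊆ C := by
    intro S
    constructor
    · rintro ⟨hSi, hSp⟩
      obtain ⟨B, hB, hsub⟩ := (hX2 _).mp hSp
      refine ⟨T B, ⟨B, hB, rfl⟩, ?_⟩
      intro β hβ
      refine ⟨hSi hβ, ?_⟩
      rintro a ⟨ha, hpa⟩
      refine hsub ⟨ha, ?_⟩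
      rw [hpa]; exact hβ
    · rintro ⟨C, hC, hsub⟩
      exact J.subset_mem C (hY1 hC) S hsub
  have hYle : #(T '' X) ≤ Cardinal.lift.{1} H.cof := by
    rw [hXc]; exact Cardinal.mk_image_le
  obtain ⟨c', hc'⟩ := Cardinal.mem_range_lift_of_le hYle
  have hc'le : c' ≤ H.cof := by
    rw [← Cardinal.lift_le.{1}, hc']; exact hYle
  refine le_trans (csInf_le (OrderBot.bddBelow _) ?_) hc'le
  exact ⟨T '' X, ⟨hY1, hY2⟩, hc'⟩

lemma induced_ws (H : IdealP κ lam) (A0 : Set (Set Ordinal.{0}))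
    (p : Set Ordinal.{0} → Ordinal.{0}) (hA0 : A0 ∉ H.mem)
    (hp1 : ∀ a ∈ A0, p a < κ.ord)
    (hp2 : ∀ ξ, {a | a ∈ A0 ∧ p a = ξ} ∈ H.mem)
    (hcof : H.cof < nonK κ (fun J => WeaklySelective J)) :
    WeaklySelective (inducedIdeal H A0 p hA0 hp1 hp2) := by
  by_contra hns
  have h1 : nonK κ (fun J => WeaklySelective J) ≤ (inducedIdeal H A0 p hA0 hp1 hp2).cof :=
    csInf_le (OrderBot.bddBelow _) ⟨_, rfl, hns⟩
  exact absurd hcof (not_lt.mpr (h1.trans (induced_cof_le H A0 p hA0 hp1 hp2)))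

end AuxProof

end PaperFormal

namespace PaperFormal

/-- Suppose `2^{<κ} = κ` and `H` is an ideal on `P_κ(λ)` with
`cof(H) < non_κ(weakly selective)`. Then for every `f : κ → κ` and every `A ∈ H⁺` there is
`B ∈ H⁺ ∩ P(A)` such that `f(∪(a∩κ)) ⊆ b` for all `a, b ∈ B` with `∪(a∩κ) < ∪(b∩κ)`. -/
theorem chi_point_like (κ lam : Cardinal.{0}) (hreg : κ.IsRegular) (huc : ℵ₀ < κ)
    (hlt : κ < lam) (h2 : (2 : Cardinal.{0}) ^< κ = κ) (H : IdealP κ lam)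
    (hcof : H.cof < nonK κ (fun J => WeaklySelective J)) :
    ∀ f ∈ funOn κ, ∀ A ∈ H.plus, ∃ B ∈ H.plus, B ⊆ A ∧
      ∀ a ∈ B, ∀ b ∈ B, supK κ a < supK κ b → Iio (f (supK κ a)) ⊆ b := by
  intro f hf A hA
  have hκord := Cardinal.isSuccLimit_ord hreg.aleph0_le
  have hAsub : A ⊆ smallSet κ lam := hA.1
  have hAnm : A ∉ H.mem := hA.2
  have hemp : (∅ : Set (Set Ordinal.{0})) ∈ H.mem := empty_mem huc H
  -- basic facts about elements of `smallSet`
  have hma : ∀ a ∈ smallSet κ lam, mfn κ a < κ.ord ∧ mfn κ a ∉ a :=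
    fun a ha => mfn_spec ha.2
  have hsa : ∀ a ∈ smallSet κ lam, supK κ a < κ.ord := fun a ha => supK_lt hreg ha.2
  -- a pairing `Iio κ.ord × Iio κ.ord ≃ Iio κ.ord`
  have hmkprod : #((Iio κ.ord) × (Iio κ.ord) : Type 1) = #(Iio κ.ord) := by
    rw [Cardinal.mk_prod, mk_Iio_ord, Cardinal.lift_id,
      Cardinal.mul_eq_self (Cardinal.aleph0_le_lift.mpr hreg.aleph0_le)]
  obtain ⟨E⟩ := Cardinal.eq.mp hmkprod
  set d1 : Ordinal.{0} → Ordinal.{0} :=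
    fun ξ => if h : ξ < κ.ord then ((E.symm ⟨ξ, h⟩).1 : Ordinal.{0}) else 0 with hd1
  set d2 : Ordinal.{0} → Ordinal.{0} :=
    fun ξ => if h : ξ < κ.ord then ((E.symm ⟨ξ, h⟩).2 : Ordinal.{0}) else 0 with hd2
  set pc : Set Ordinal.{0} → Ordinal.{0} := fun a =>
    if h : mfn κ a < κ.ord ∧ supK κ a < κ.ord then
      (E (⟨mfn κ a, h.1⟩, ⟨supK κ a, h.2⟩) : Ordinal.{0}) else 0 with hpc
  have hd1lt : ∀ ξ, d1 ξ < κ.ord := by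
    intro ξ
    rw [hd1]; dsimp only
    split
    · exact ((E.symm ⟨ξ, by assumption⟩).1).2
    · exact hκord.pos
  have hd2lt : ∀ ξ, d2 ξ < κ.ord := by
    intro ξ
    rw [hd2]; dsimp only
    split
    · exact ((E.symm ⟨ξ, by assumption⟩).2).2
    · exact hκord.pos
  have hpc_lt : ∀ a ∈ smallSet κ lam, pc a < κ.ord := by
    intro a ha
    rw [hpc]; dsimp only
    rw [dif_pos ⟨(hma a ha).1, hsa a ha⟩]
    exact (E (⟨mfn κ a, (hma a ha).1⟩, ⟨supK κ a, hsa a ha⟩)).2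
  have hd1pc : ∀ a ∈ smallSet κ lam, d1 (pc a) = mfn κ a := by
    intro a ha
    have h1 : mfn κ a < κ.ord ∧ supK κ a < κ.ord := ⟨(hma a ha).1, hsa a ha⟩
    rw [hpc]; dsimp only
    rw [dif_pos h1, hd1]; dsimp only
    rw [dif_pos (show ((E (⟨mfn κ a, h1.1⟩, ⟨supK κ a, h1.2⟩) : Iio κ.ord) : Ordinal.{0}) < κ.ord
      from (E (⟨mfn κ a, h1.1⟩, ⟨supK κ a, h1.2⟩)).2)]
    rw [Subtype.coe_eta, Equiv.symm_apply_apply]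
  have hd2pc : ∀ a ∈ smallSet κ lam, d2 (pc a) = supK κ a := by
    intro a ha
    have h1 : mfn κ a < κ.ord ∧ supK κ a < κ.ord := ⟨(hma a ha).1, hsa a ha⟩
    rw [hpc]; dsimp only
    rw [dif_pos h1, hd2]; dsimp only
    rw [dif_pos (show ((E (⟨mfn κ a, h1.1⟩, ⟨supK κ a, h1.2⟩) : Iio κ.ord) : Ordinal.{0}) < κ.ord
      from (E (⟨mfn κ a, h1.1⟩, ⟨supK κ a, h1.2⟩)).2)]
    rw [Subtype.coe_eta, Equiv.symm_apply_apply]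
  -- the coding ideal J_c on κ
  have hpc2 : ∀ ξ, {a | a ∈ A ∧ pc a = ξ} ∈ H.mem := by
    intro ξ
    by_cases hξ : ξ < κ.ord
    · refine H.subset_mem _ (mle_mem hreg huc hlt H (hd1lt ξ)) _ ?_
      rintro a ⟨ha, hpa⟩
      refine ⟨hAsub ha, le_of_eq ?_⟩
      rw [← hd1pc a (hAsub ha), hpa]
    · refine H.subset_mem _ hemp _ ?_
      rintro a ⟨ha, hpa⟩
      exact absurd (hpa ▸ hpc_lt a (hAsub ha)) hξ
  set Jc := inducedIdeal H A pc hAnm (fun a ha => hpc_lt a (hAsub ha)) hpc2 with hJcdef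
  have hwsc : WeaklySelective Jc :=
    induced_ws H A pc hAnm (fun a ha => hpc_lt a (hAsub ha)) hpc2 hcof
  -- apply the weak P-point property to the first projection `d1`
  have hfibmem : ∀ β, {α ∈ Iio κ.ord | d1 α = β} ∈ Jc.mem := by
    intro β
    refine ⟨fun x hx => hx.1, ?_⟩
    by_cases hβ : β < κ.ord
    · refine H.subset_mem _ (mle_mem hreg huc hlt H hβ) _ ?_
      rintro a ⟨ha, hpa, hda⟩
      refine ⟨hAsub ha, le_of_eq ?_⟩
      rw [← hd1pc a (hAsub ha), hda]
    · refine H.subset_mem _ hemp _ ?_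
      rintro a ⟨ha, hpa, hda⟩
      exact absurd (hda ▸ hd1lt (pc a)) hβ
  obtain ⟨Bs, hBsplus, hBssub, hfib⟩ :=
    hwsc.1 (Iio κ.ord) ⟨subset_rfl, Jc.ne_top⟩ d1 (fun α _ => hd1lt α) hfibmem
  set A1 : Set (Set Ordinal.{0}) := {a | a ∈ A ∧ pc a ∈ Bs} with hA1def
  have hA1nm : A1 ∉ H.mem := by
    intro hmem
    exact hBsplus.2 ⟨hBsplus.1, hmem⟩
  have hA1sub : A1 ⊆ A := fun a ha => ha.1
  -- the bounding function φ and its monotone majorant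
  set φ : Ordinal.{0} → Ordinal.{0} :=
    fun γ => sSup ((fun ξ => d2 ξ + 1) '' {ξ ∈ Bs | d1 ξ = γ}) with hφdef
  have hφlt : ∀ γ, φ γ < κ.ord := by
    intro γ
    refine sSup_lt_ord_small hreg ?_ (lt_of_le_of_lt Cardinal.mk_image_le (hfib γ))
    rintro x ⟨ξ, hξ, rfl⟩
    show d2 ξ + 1 < κ.ord
    rw [Ordinal.add_one_eq_succ]
    exact hκord.succ_lt (hd2lt ξ)
  have hφbd : ∀ a ∈ A1, supK κ a < φ (mfn κ a) := by
    intro a ha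
    have ham := hAsub ha.1
    have hmem : supK κ a + 1 ∈ (fun ξ => d2 ξ + 1) '' {ξ ∈ Bs | d1 ξ = mfn κ a} := by
      refine ⟨pc a, ⟨ha.2, hd1pc a ham⟩, ?_⟩
      show d2 (pc a) + 1 = supK κ a + 1
      rw [hd2pc a ham]
    have hbdd : BddAbove ((fun ξ => d2 ξ + 1) '' {ξ ∈ Bs | d1 ξ = mfn κ a}) := by
      refine ⟨κ.ord, ?_⟩
      rintro x ⟨ξ, hξ, rfl⟩
      show d2 ξ + 1 ≤ κ.ord
      rw [Ordinal.add_one_eq_succ]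
      exact (hκord.succ_lt (hd2lt ξ)).le
    have hlt1 : supK κ a < supK κ a + 1 := by
      rw [Ordinal.add_one_eq_succ]; exact Order.lt_succ _
    exact lt_of_lt_of_le hlt1 (le_csSup hbdd hmem)
  set φh : Ordinal.{0} → Ordinal.{0} := fun γ => sSup (φ '' Iio (γ + 1)) with hφhdef
  have hφhbdd : ∀ γ : Ordinal.{0}, BddAbove (φ '' Iio (γ + 1)) := by
    intro γ
    refine ⟨κ.ord, ?_⟩
    rintro x ⟨γ', _, rfl⟩
    exact (hφlt γ').le
  have hφhlt : ∀ γ < κ.ord, φh γ < κ.ord := by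
    intro γ hγ
    refine sSup_lt_ord_small hreg ?_ ?_
    · rintro x ⟨γ', _, rfl⟩; exact hφlt γ'
    · refine lt_of_le_of_lt Cardinal.mk_image_le ?_
      rw [Ordinal.mk_Iio_ordinal]
      have hsucc : γ + 1 < κ.ord := by
        rw [Ordinal.add_one_eq_succ]; exact hκord.succ_lt hγ
      exact Cardinal.lift_lt.mpr (Cardinal.lt_ord.mp hsucc)
  have hself : ∀ γ : Ordinal.{0}, γ ∈ Iio (γ + 1) := by
    intro γ
    rw [mem_Iio, Ordinal.add_one_eq_succ]
    exact Order.lt_succ _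
  have hφhmono : ∀ γ1 γ2 : Ordinal.{0}, γ1 ≤ γ2 → φh γ1 ≤ φh γ2 := by
    intro γ1 γ2 h12
    refine csSup_le_csSup (hφhbdd γ2) ⟨φ γ1, ⟨γ1, hself γ1, rfl⟩⟩ ?_
    apply image_mono
    intro x hx
    rw [mem_Iio] at hx ⊢
    refine lt_of_lt_of_le hx ?_
    exact add_le_add_left h12 1
  have hφle : ∀ γ : Ordinal.{0}, φ γ ≤ φh γ :=
    fun γ => le_csSup (hφhbdd γ) ⟨γ, hself γ, rfl⟩
  -- the function ĝ dominating f
  set gh : Ordinal.{0} → Ordinal.{0} := fun η => sSup ((fun γ => f γ + 1) '' Iio (η + 1))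
    with hghdef
  have hghlt : ∀ η < κ.ord, gh η < κ.ord := by
    intro η hη
    have hsucc : η + 1 < κ.ord := by
      rw [Ordinal.add_one_eq_succ]; exact hκord.succ_lt hη
    refine sSup_lt_ord_small hreg ?_ ?_
    · rintro x ⟨γ, hγ, rfl⟩
      show f γ + 1 < κ.ord
      rw [Ordinal.add_one_eq_succ]
      exact hκord.succ_lt (hf γ ((mem_Iio.mp hγ).trans hsucc))
    · refine lt_of_le_of_lt Cardinal.mk_image_le ?_
      rw [Ordinal.mk_Iio_ordinal]
      exact Cardinal.lift_lt.mpr (Cardinal.lt_ord.mp hsucc)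
  have hfgh : ∀ α < κ.ord, f α < gh α := by
    intro α hα
    have hsucc : α + 1 < κ.ord := by
      rw [Ordinal.add_one_eq_succ]; exact hκord.succ_lt hα
    have hbdd : BddAbove ((fun γ => f γ + 1) '' Iio (α + 1)) := by
      refine ⟨κ.ord, ?_⟩
      rintro x ⟨γ, hγ, rfl⟩
      show f γ + 1 ≤ κ.ord
      rw [Ordinal.add_one_eq_succ]
      exact (hκord.succ_lt (hf γ ((mem_Iio.mp hγ).trans hsucc))).le
    have hlt1 : f α < f α + 1 := by
      rw [Ordinal.add_one_eq_succ]; exact Order.lt_succ _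
    exact lt_of_lt_of_le hlt1 (le_csSup hbdd ⟨α, hself α, rfl⟩)
  -- the ideal J_s on κ induced by `supK` on A1, and the weak Q-point property
  have hsup2 : ∀ ξ, {a | a ∈ A1 ∧ supK κ a = ξ} ∈ H.mem := by
    intro ξ
    by_cases hξ : ξ < κ.ord
    · refine H.subset_mem _ (supK_fiber_mem hreg huc hlt H hξ) _ ?_
      rintro a ⟨ha, hsa'⟩
      exact ⟨hAsub ha.1, hsa'⟩
    · refine H.subset_mem _ hemp _ ?_
      rintro a ⟨ha, hsa'⟩
      exact absurd (hsa' ▸ hsa a (hAsub ha.1)) hξ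
  set Js := inducedIdeal H A1 (supK κ) hA1nm (fun a ha => hsa a (hAsub ha.1)) hsup2
    with hJsdef
  have hwss : WeaklySelective Js :=
    induced_ws H A1 (supK κ) hA1nm (fun a ha => hsa a (hAsub ha.1)) hsup2 hcof
  set G2 : Ordinal.{0} → Ordinal.{0} := fun α => φh (gh α) with hG2def
  have hG2 : G2 ∈ funOn κ := fun α hα => hφhlt _ (hghlt α hα)
  obtain ⟨S, hSplus, hSsub, hQ⟩ := hwss.2 (Iio κ.ord) ⟨subset_rfl, Js.ne_top⟩ G2 hG2
  -- the final positive set B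
  refine ⟨{a | a ∈ A1 ∧ supK κ a ∈ S}, ⟨fun a ha => hAsub ha.1.1, ?_⟩, fun a ha => ha.1.1, ?_⟩
  · intro hmem
    exact hSplus.2 ⟨hSplus.1, hmem⟩
  · intro a ha b hb hab
    have hbs : b ∈ smallSet κ lam := hAsub hb.1.1
    have hQab : G2 (supK κ a) < supK κ b := hQ _ ha.2 _ hb.2 hab
    have h1 : supK κ b < φh (mfn κ b) := lt_of_lt_of_le (hφbd b hb.1) (hφle _)
    have h3 : gh (supK κ a) < mfn κ b := by
      by_contra hcon
      push_neg at hcon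
      exact absurd (hQab.trans h1) (not_lt.mpr (hφhmono _ _ hcon))
    intro γ hγ
    rw [mem_Iio] at hγ
    have hγm : γ < mfn κ b :=
      hγ.trans ((hfgh (supK κ a) (hsa a (hAsub ha.1.1))).trans h3)
    exact lt_mfn_mem hγm (hma b hbs).1


end PaperFormal
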